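/- Let G be a Z2-graded Lie algebra over a field k (G = G0 ⊕ G1 as vector spaces, [G0,G0] ⊆ G0, [G0,G1] ⊆ G1, [G1,G1] ⊆ G0) and let R : G1 → G0 be a linear map. Define G₋ = {m − R(m) : m ∈ G1}. Then G₋ is closed under the Lie bracket of G (i.e. is a Lie subalgebra) if and only if R satisfies the modified Yang-Baxter equation (1.3): R([R(X),Y] − [R(Y),X]) − [R(X),R(Y)] − [X,Y] = 0 for all X, Y ∈ G1. -/
import Mathlib

/-- Uniqueness of decomposition for complementary submodules. -/
lemma myCompl_unique8 {k G : Type*} [Field k] [AddCommGroup G] [Module k G]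
    {G0 G1 : Submodule k G} (hG01 : IsCompl G0 G1)
    {u1 u2 v1 v2 : G} (hu1 : u1 ∈ G1) (hu2 : u2 ∈ G1) (hv1 : v1 ∈ G0) (hv2 : v2 ∈ G0)
    (h : u1 + v1 = u2 + v2) : u1 = u2 ∧ v1 = v2 := by
  have hd : u1 - u2 = v2 - v1 := sub_eq_sub_iff_add_eq_add.mpr (h.trans (add_comm _ _))
  have h1 : u1 - u2 ∈ G1 := sub_mem hu1 hu2
  have h0 : u1 - u2 ∈ G0 := hd ▸ sub_mem hv2 hv1
  have hmem : u1 - u2 ∈ G0 ⊓ G1 := ⟨h0, h1⟩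
  rw [hG01.inf_eq_bot] at hmem
  have hz : u1 = u2 := sub_eq_zero.mp hmem
  subst hz
  exact ⟨rfl, add_left_cancel h⟩

/-- For a Z2-graded Lie algebra `G = G0 ⊕ G1` and a linear map
`R : G1 → G0`, the subspace `G₋ = {m − R(m) : m ∈ G1}` is closed under the
Lie bracket iff `R` satisfies the modified Yang-Baxter equation (1.3). -/
theorem stmt_8 {k G : Type*} [Field k] [LieRing G] [LieAlgebra k G]
    (G0 G1 : Submodule k G)
    (hG01 : IsCompl G0 G1)
    (h00 : ∀ x ∈ G0, ∀ y ∈ G0, ⁅x, y⁆ ∈ G0)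
    (h01 : ∀ x ∈ G0, ∀ y ∈ G1, ⁅x, y⁆ ∈ G1)
    (h11 : ∀ x ∈ G1, ∀ y ∈ G1, ⁅x, y⁆ ∈ G0)
    (R : G →ₗ[k] G)
    (hR : ∀ x ∈ G1, R x ∈ G0)
    (Gm : Set G)
    (hGm : Gm = {y | ∃ m ∈ G1, y = m - R m}) :
    (∀ a ∈ Gm, ∀ b ∈ Gm, ⁅a, b⁆ ∈ Gm) ↔
      (∀ X ∈ G1, ∀ Y ∈ G1,
        R (⁅R X, Y⁆ - ⁅R Y, X⁆) - ⁅R X, R Y⁆ - ⁅X, Y⁆ = 0) := by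
  subst hGm
  constructor
  · intro hcl X hX Y hY
    have ha : X - R X ∈ {y | ∃ m ∈ G1, y = m - R m} := ⟨X, hX, rfl⟩
    have hb : Y - R Y ∈ {y | ∃ m ∈ G1, y = m - R m} := ⟨Y, hY, rfl⟩
    obtain ⟨m, hm, hme⟩ := hcl _ ha _ hb
    -- decompose the bracket
    have hbr : ⁅X - R X, Y - R Y⁆ =
        (⁅R Y, X⁆ - ⁅R X, Y⁆) + (⁅X, Y⁆ + ⁅R X, R Y⁆) := by
      simp only [lie_sub, sub_lie]
      rw [show ⁅X, R Y⁆ = -⁅R Y, X⁆ from (lie_skew _ _).symm]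
      abel
    have hu : ⁅R Y, X⁆ - ⁅R X, Y⁆ ∈ G1 :=
      sub_mem (h01 _ (hR Y hY) _ hX) (h01 _ (hR X hX) _ hY)
    have hv : ⁅X, Y⁆ + ⁅R X, R Y⁆ ∈ G0 :=
      add_mem (h11 _ hX _ hY) (h00 _ (hR X hX) _ (hR Y hY))
    have heq : (⁅R Y, X⁆ - ⁅R X, Y⁆) + (⁅X, Y⁆ + ⁅R X, R Y⁆) = m + (- R m) := by
      rw [← hbr, hme]; abel
    obtain ⟨h1, h2⟩ := myCompl_unique8 hG01 hu hm hv (neg_mem (hR m hm)) heq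
    have hRm : R (⁅R Y, X⁆ - ⁅R X, Y⁆) = R m := by rw [h1]
    have : R (⁅R X, Y⁆ - ⁅R Y, X⁆) = ⁅X, Y⁆ + ⁅R X, R Y⁆ := by
      have : R (⁅R X, Y⁆ - ⁅R Y, X⁆) = - R (⁅R Y, X⁆ - ⁅R X, Y⁆) := by
        rw [← map_neg, neg_sub]
      rw [this, hRm, ← h2]
    rw [this]; abel
  · intro hmybe a ha b hb
    obtain ⟨m, hm, rfl⟩ := ha
    obtain ⟨n, hn, rfl⟩ := hb
    refine ⟨⁅R n, m⁆ - ⁅R m, n⁆, sub_mem (h01 _ (hR n hn) _ hm) (h01 _ (hR m hm) _ hn), ?_⟩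
    have key := hmybe m hm n hn
    have hRu : R (⁅R n, m⁆ - ⁅R m, n⁆) = - (⁅m, n⁆ + ⁅R m, R n⁆) := by
      have : R (⁅R n, m⁆ - ⁅R m, n⁆) = - R (⁅R m, n⁆ - ⁅R n, m⁆) := by
        rw [← map_neg, neg_sub]
      rw [this]
      have : R (⁅R m, n⁆ - ⁅R n, m⁆) = ⁅R m, R n⁆ + ⁅m, n⁆ := by
        rw [sub_sub, sub_eq_zero] at key; exact key
      rw [this]; abel
    rw [hRu]
    simp only [lie_sub, sub_lie]
    rw [show ⁅m, R n⁆ = -⁅R n, m⁆ from (lie_skew _ _).symm]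
    abel
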